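/- Theorem (stationary route delay): let r ∈ R be a route with a_j > 0 for every j ∈ r, and let E[Q_j] := ∑_m T(m)_j · μ(m) denote the expected stationary length of queue j. Then the expected end-to-end delay of route r, given by Little's law as E[D_r] := ∑_{j ∈ r} E[Q_j] / a_j, satisfies E[D_r] = ∑_{j ∈ r} ∑_{l ∈ L} A_{lj} / (1 − a_l). -/

import Mathlib

open scoped BigOperators Classical

/-- The probability mass function `p_l` of the context (extended by zero off its support):
`p_l(k) = (1 - a_l) * (|k|)! / ∏_j (k j)! * ∏_j (A l j * a_j)^(k j)` where `|k| = ∑ j, k j`. -/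
noncomputable def pl {J : Type*} [Fintype J] (Al : J → ℝ) (aJ : J → ℝ) (al : ℝ)
    (k : J → ℕ) : ℝ :=
  (1 - al) * (((∑ j, k j).factorial : ℝ) / ∏ j, ((k j).factorial : ℝ)) *
    ∏ j, (Al j * aJ j) ^ k j

/- ### Auxiliary lemmas -/

/-- Group a tsum over `α` according to the fibers of `φ : α → ℕ`, each fiber being the
finset `s n`. -/
private lemma tsum_fiber_enn {α : Type*} (φ : α → ℕ) (s : ℕ → Finset α)
    (hs : ∀ n a, a ∈ s n ↔ φ a = n) (g : α → ENNReal) :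
    ∑' a, g a = ∑' n, ∑ a ∈ s n, g a := by
  calc ∑' a, g a
      = ∑' σ : Σ n : ℕ, {a // φ a = n}, g σ.2 :=
        ((Equiv.sigmaFiberEquiv φ).tsum_eq g).symm
    _ = ∑' (n : ℕ), ∑' (b : {a // φ a = n}), g b := ENNReal.tsum_sigma' _
    _ = ∑' (n : ℕ), ∑ a ∈ s n, g a := by
        refine tsum_congr fun n => ?_
        rw [← Finset.tsum_subtype (s n) g]
        exact ((Equiv.subtypeEquivRight (hs n)).tsum_eq
          (fun b : {a // φ a = n} => g b)).symm

private def finConsEquiv (n : ℕ) (β : Type*) : (β × (Fin n → β)) ≃ (Fin (n + 1) → β) where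
  toFun p := Fin.cons p.1 p.2
  invFun m := (m 0, fun i => m i.succ)
  left_inv p := by
    obtain ⟨a, m⟩ := p
    simp
  right_inv m := by
    funext i
    refine Fin.cases ?_ (fun j => ?_) i <;> simp

private lemma tsum_pi_fin {β : Type*} :
    ∀ (n : ℕ) (f : Fin n → β → ENNReal),
      ∑' m : Fin n → β, ∏ i, f i (m i) = ∏ i, ∑' b, f i b := by
  intro n
  induction n with
  | zero =>
    intro f
    have h1 : ∀ m : Fin 0 → β, ∏ i, f i (m i) = 1 := fun m => by simp
    have h2 : (∏ i, ∑' b, f i b) = 1 := by simp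
    rw [h2]
    simp only [h1]
    exact tsum_eq_single (fun i : Fin 0 => i.elim0)
      (fun b hb => absurd (Subsingleton.elim _ _) hb)
  | succ n ih =>
    intro f
    calc ∑' m : Fin (n + 1) → β, ∏ i, f i (m i)
        = ∑' p : β × (Fin n → β), ∏ i, f i (finConsEquiv n β p i) :=
          ((finConsEquiv n β).tsum_eq (fun m => ∏ i, f i (m i))).symm
      _ = ∑' p : β × (Fin n → β), f 0 p.1 * ∏ i : Fin n, f i.succ (p.2 i) := by
          refine tsum_congr fun p => ?_
          rw [Fin.prod_univ_succ]
          simp [finConsEquiv]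
      _ = ∑' b : β, ∑' m2 : Fin n → β, f 0 b * ∏ i : Fin n, f i.succ (m2 i) :=
          ENNReal.tsum_prod'
      _ = (∑' b, f 0 b) * ∑' m2 : Fin n → β, ∏ i : Fin n, f i.succ (m2 i) := by
          simp_rw [ENNReal.tsum_mul_left]
          exact ENNReal.tsum_mul_right
      _ = ∏ i : Fin (n + 1), ∑' b, f i b := by
          rw [ih (fun i => f i.succ), Fin.prod_univ_succ]

private lemma tsum_pi_prod {ι : Type*} [Fintype ι] {β : Type*} (f : ι → β → ENNReal) :
    ∑' m : ι → β, ∏ i, f i (m i) = ∏ i, ∑' b, f i b := by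
  classical
  let e := Fintype.equivFin ι
  let e' : (Fin (Fintype.card ι) → β) ≃ (ι → β) := Equiv.arrowCongr e.symm (Equiv.refl β)
  calc ∑' m : ι → β, ∏ i, f i (m i)
      = ∑' m' : Fin (Fintype.card ι) → β, ∏ i : ι, f i (e' m' i) :=
        (e'.tsum_eq (fun m => ∏ i, f i (m i))).symm
    _ = ∑' m' : Fin (Fintype.card ι) → β,
          ∏ i' : Fin (Fintype.card ι), f (e.symm i') (m' i') := by
        refine tsum_congr fun m' => ?_
        rw [← Equiv.prod_comp e (fun i' => f (e.symm i') (m' i'))]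
        refine Finset.prod_congr rfl fun i _ => ?_
        simp [e']
    _ = ∏ i' : Fin (Fintype.card ι), ∑' b, f (e.symm i') b := tsum_pi_fin _ _
    _ = ∏ i : ι, ∑' b, f i b := Equiv.prod_comp e.symm fun i => ∑' b, f i b

private lemma factorial_ratio {J : Type*} [Fintype J] (k : J → ℕ) :
    (((∑ j, k j).factorial : ℝ) / ∏ j, ((k j).factorial : ℝ))
      = (Nat.multinomial Finset.univ k : ℝ) := by
  have h := Nat.multinomial_spec Finset.univ k
  have hne : (∏ j, ((k j).factorial : ℝ)) ≠ 0 := by positivity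
  rw [div_eq_iff hne]
  exact_mod_cast (h.symm.trans (mul_comm _ _))

private lemma sum_update_succ {J : Type*} [Fintype J] [DecidableEq J] (k : J → ℕ) (j : J) :
    ∑ i, Function.update k j (k j + 1) i = (∑ i, k i) + 1 := by
  have h1 := Finset.sum_update_of_mem (Finset.mem_univ j) k (k j + 1)
  rw [Finset.sdiff_singleton_eq_erase] at h1
  have h2 := Finset.add_sum_erase Finset.univ k (Finset.mem_univ j)
  omega

private lemma mult_succ {J : Type*} [Fintype J] [DecidableEq J] (k : J → ℕ) (j : J) :
    (k j + 1) * Nat.multinomial Finset.univ (Function.update k j (k j + 1)) =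
      ((∑ i, k i) + 1) * Nat.multinomial Finset.univ k := by
  have hprodpos : 0 < ∏ i, (k i).factorial :=
    Finset.prod_pos fun i _ => Nat.factorial_pos _
  apply Nat.eq_of_mul_eq_mul_left hprodpos
  have hg := Nat.multinomial_spec Finset.univ (Function.update k j (k j + 1))
  have hk := Nat.multinomial_spec Finset.univ k
  have hsum := sum_update_succ k j
  have hfun : (fun i => (Function.update k j (k j + 1) i).factorial)
      = Function.update (fun i => (k i).factorial) j (k j + 1).factorial := by
    funext i
    exact Function.apply_update (fun _ n => n.factorial) k j (k j + 1) i
  have hprod : (∏ i, (Function.update k j (k j + 1) i).factorial)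
      = (k j + 1) * ∏ i, (k i).factorial := by
    rw [hfun, Finset.prod_update_of_mem (Finset.mem_univ j),
      Finset.sdiff_singleton_eq_erase, Nat.factorial_succ, mul_assoc]
    congr 1
    exact Finset.mul_prod_erase Finset.univ (fun i => (k i).factorial) (Finset.mem_univ j)
  calc (∏ i, (k i).factorial) *
        ((k j + 1) * Nat.multinomial Finset.univ (Function.update k j (k j + 1)))
      = (∏ i, (Function.update k j (k j + 1) i).factorial) *
          Nat.multinomial Finset.univ (Function.update k j (k j + 1)) := by
        rw [hprod]; ring
    _ = ((∑ i, k i) + 1).factorial := by rw [hg, hsum]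
    _ = ((∑ i, k i) + 1) * (∑ i, k i).factorial := Nat.factorial_succ _
    _ = ((∑ i, k i) + 1) * ((∏ i, (k i).factorial) * Nat.multinomial Finset.univ k) := by
        rw [hk]
    _ = (∏ i, (k i).factorial) * (((∑ i, k i) + 1) * Nat.multinomial Finset.univ k) := by
        ring

private lemma prod_pow_update_succ {J : Type*} [Fintype J] [DecidableEq J]
    (x : J → ENNReal) (k : J → ℕ) (j : J) :
    ∏ i, x i ^ (Function.update k j (k j + 1) i) = x j * ∏ i, x i ^ k i := by
  have hfun : (fun i => x i ^ (Function.update k j (k j + 1) i))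
      = Function.update (fun i => x i ^ k i) j (x j ^ (k j + 1)) := by
    funext i
    exact Function.apply_update (fun a n => x a ^ n) k j (k j + 1) i
  calc ∏ i, x i ^ (Function.update k j (k j + 1) i)
      = x j ^ (k j + 1) * ∏ i ∈ Finset.univ.erase j, x i ^ k i := by
        rw [hfun, Finset.prod_update_of_mem (Finset.mem_univ j),
          Finset.sdiff_singleton_eq_erase]
    _ = x j * (x j ^ (k j) * ∏ i ∈ Finset.univ.erase j, x i ^ k i) := by
        rw [pow_succ]; ring
    _ = x j * ∏ i, x i ^ k i := by
        congr 1
        exact Finset.mul_prod_erase Finset.univ (fun i => x i ^ k i) (Finset.mem_univ j)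

private lemma sum_piAntidiag_mean {J : Type*} [Fintype J] [DecidableEq J]
    (x : J → ENNReal) (j : J) (n : ℕ) :
    ∑ k ∈ Finset.piAntidiag Finset.univ (n + 1),
        (k j : ENNReal) * (Nat.multinomial Finset.univ k : ENNReal) * ∏ i, x i ^ k i
      = ((n : ENNReal) + 1) * x j * (∑ i, x i) ^ n := by
  classical
  have h0 : ∀ k ∈ Finset.piAntidiag Finset.univ (n + 1),
      (k j : ENNReal) * (Nat.multinomial Finset.univ k : ENNReal) * ∏ i, x i ^ k i ≠ 0 →
        k j ≠ 0 := by
    intro k _ hk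
    intro hkj
    apply hk
    simp [hkj]
  have hbij : ∑ k' ∈ Finset.piAntidiag Finset.univ n,
        ((n : ENNReal) + 1) * (Nat.multinomial Finset.univ k' : ENNReal) *
          (x j * ∏ i, x i ^ k' i)
      = ∑ k ∈ (Finset.piAntidiag Finset.univ (n + 1)).filter fun k => k j ≠ 0,
          (k j : ENNReal) * (Nat.multinomial Finset.univ k : ENNReal) * ∏ i, x i ^ k i := by
    refine Finset.sum_bij' (fun k' _ => Function.update k' j (k' j + 1))
      (fun k _ => Function.update k j (k j - 1)) ?_ ?_ ?_ ?_ ?_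
    · intro k' hk'
      simp only [Finset.mem_piAntidiag, Finset.mem_univ, imp_true_iff, and_true] at hk'
      simp only [Finset.mem_filter, Finset.mem_piAntidiag, Finset.mem_univ, imp_true_iff,
        and_true]
      have e1 : Finset.univ.sum (Function.update k' j (k' j + 1))
          = ∑ i, Function.update k' j (k' j + 1) i := rfl
      have e2 := sum_update_succ k' j
      have e3 : Finset.univ.sum k' = ∑ i, k' i := rfl
      constructor
      · omega
      · simp [Function.update_self]
    · intro k hk
      simp only [Finset.mem_filter, Finset.mem_piAntidiag, Finset.mem_univ, imp_true_iff,
        and_true] at hk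
      simp only [Finset.mem_piAntidiag, Finset.mem_univ, imp_true_iff, and_true]
      have h1 := Finset.sum_update_of_mem (Finset.mem_univ j) k (k j - 1)
      rw [Finset.sdiff_singleton_eq_erase] at h1
      have h2 := Finset.add_sum_erase Finset.univ k (Finset.mem_univ j)
      have h3 : k j ≠ 0 := hk.2
      have h4 : ∑ i, k i = n + 1 := hk.1
      have e1 : Finset.univ.sum (Function.update k j (k j - 1))
          = ∑ i, Function.update k j (k j - 1) i := rfl
      omega
    · intro k' _
      funext i
      by_cases hij : i = j
      · subst hij; simp
      · simp [Function.update_of_ne hij]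
    · intro k hk
      have h3 : k j ≠ 0 := (Finset.mem_filter.1 hk).2
      funext i
      by_cases hij : i = j
      · subst hij; simp; omega
      · simp [Function.update_of_ne hij]
    · intro k' hk'
      simp only [Finset.mem_piAntidiag, Finset.mem_univ, imp_true_iff, and_true] at hk'
      have hks : (∑ i, k' i) = n := hk'
      have hm := mult_succ k' j
      rw [hks] at hm
      simp only [Function.update_self]
      rw [prod_pow_update_succ x k' j]
      congr 1
      exact_mod_cast hm.symm
  calc ∑ k ∈ Finset.piAntidiag Finset.univ (n + 1),
        (k j : ENNReal) * (Nat.multinomial Finset.univ k : ENNReal) * ∏ i, x i ^ k i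
      = ∑ k ∈ (Finset.piAntidiag Finset.univ (n + 1)).filter fun k => k j ≠ 0,
          (k j : ENNReal) * (Nat.multinomial Finset.univ k : ENNReal) * ∏ i, x i ^ k i :=
        (Finset.sum_filter_of_ne h0).symm
    _ = ∑ k' ∈ Finset.piAntidiag Finset.univ n,
          ((n : ENNReal) + 1) * (Nat.multinomial Finset.univ k' : ENNReal) *
            (x j * ∏ i, x i ^ k' i) := hbij.symm
    _ = ((n : ENNReal) + 1) * x j * (∑ i, x i) ^ n := by
        rw [Finset.sum_pow_eq_sum_piAntidiag Finset.univ x n, Finset.mul_sum]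
        exact (Finset.sum_congr rfl fun k _ => by ring).symm

private lemma tsum_add_one_mul_geometric (σ : ENNReal) :
    ∑' n : ℕ, ((n : ENNReal) + 1) * σ ^ n = ((1 - σ)⁻¹) ^ 2 := by
  calc ∑' n : ℕ, ((n : ENNReal) + 1) * σ ^ n
      = ∑' n : ℕ, ∑ _p ∈ Finset.HasAntidiagonal.antidiagonal n, σ ^ n := by
        refine tsum_congr fun n => ?_
        rw [Finset.sum_const, Finset.Nat.card_antidiagonal, nsmul_eq_mul]
        push_cast
        ring
    _ = ∑' n : ℕ, ∑ p ∈ Finset.HasAntidiagonal.antidiagonal n, σ ^ (p.1 + p.2) := by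
        refine tsum_congr fun n => Finset.sum_congr rfl fun p hp => ?_
        rw [Finset.HasAntidiagonal.mem_antidiagonal.1 hp]
    _ = ∑' p : ℕ × ℕ, σ ^ (p.1 + p.2) :=
        (tsum_fiber_enn (fun p : ℕ × ℕ => p.1 + p.2) (fun n => Finset.HasAntidiagonal.antidiagonal n)
          (fun n p => Finset.HasAntidiagonal.mem_antidiagonal) _).symm
    _ = ∑' a : ℕ, ∑' b : ℕ, σ ^ a * σ ^ b := by
        rw [ENNReal.tsum_prod']
        exact tsum_congr fun a => tsum_congr fun b => by rw [← pow_add]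
    _ = ((1 - σ)⁻¹) ^ 2 := by
        simp_rw [ENNReal.tsum_mul_left]
        rw [ENNReal.tsum_mul_right, ENNReal.tsum_geometric, sq]

/-- stationary route delay: let `r` be a route with `a_j > 0` for every
`j ∈ r`, and let `E[Q_j] = ∑_m T(m) j * μ(m)` be the expected stationary length of queue
`j` under the product measure `μ(m) = ∏ l, p_l (m l)`, `T(m) j = ∑ l, m l j`.  Then the
expected end-to-end delay of route `r`, given by Little's law as
`E[D_r] = ∑_{j ∈ r} E[Q_j] / a_j`, satisfies
`E[D_r] = ∑_{j ∈ r} ∑_l A l j / (1 - a_l)`. -/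
theorem stationary_route_delay
    {J L R : Type*} [Fintype J] [Nonempty J] [DecidableEq J]
    [Fintype L] [Nonempty L] [Fintype R]
    (A : L → J → ℝ) (hA : ∀ l j, 0 ≤ A l j)
    (route : R → List J) (hnodup : ∀ r, (route r).Nodup)
    (a : R → ℝ) (ha : ∀ r, 0 < a r)
    (aJ : J → ℝ) (haJ : ∀ j, aJ j = ∑ r : R, if j ∈ route r then a r else 0)
    (aL : L → ℝ) (haL : ∀ l, aL l = ∑ j, A l j * aJ j)
    (hsub : ∀ l, aL l < 1)
    (r : R) (hpos : ∀ j ∈ route r, 0 < aJ j) :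
    ∑ j ∈ (route r).toFinset,
        (∑' m : L → J → ℕ, ((∑ l, m l j : ℕ) : ℝ) * ∏ l, pl (A l) aJ (aL l) (m l)) / aJ j
      = ∑ j ∈ (route r).toFinset, ∑ l, A l j / (1 - aL l) := by
  classical
  have haJ0 : ∀ j, 0 ≤ aJ j := by
    intro j
    rw [haJ j]
    refine Finset.sum_nonneg fun r' _ => ?_
    by_cases h : j ∈ route r' <;> simp [h, (ha r').le]
  have haL0 : ∀ l, 0 ≤ aL l := fun l => by
    rw [haL l]
    exact Finset.sum_nonneg fun i _ => mul_nonneg (hA l i) (haJ0 i)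
  have h1aL : ∀ l, 0 < 1 - aL l := fun l => by linarith [hsub l]
  set xx : L → J → ENNReal := fun l i => ENNReal.ofReal (A l i * aJ i) with hxx
  set Q : L → (J → ℕ) → ENNReal :=
    fun l k => (Nat.multinomial Finset.univ k : ENNReal) * ∏ i, xx l i ^ k i with hQ
  set σ : L → ENNReal := fun l => ENNReal.ofReal (aL l) with hσdef
  have hσsum : ∀ l, ∑ i, xx l i = σ l := by
    intro l
    rw [hσdef]
    simp only [hxx]
    rw [← ENNReal.ofReal_sum_of_nonneg (fun i _ => mul_nonneg (hA l i) (haJ0 i))]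
    exact congrArg _ (haL l).symm
  have h1σ : ∀ l, (1 : ENNReal) - σ l = ENNReal.ofReal (1 - aL l) := fun l => by
    rw [ENNReal.ofReal_sub _ (haL0 l), ENNReal.ofReal_one]
  have h1σ0 : ∀ l, (1 : ENNReal) - σ l ≠ 0 := fun l => by
    rw [h1σ l]
    exact (ENNReal.ofReal_pos.2 (h1aL l)).ne'
  have h1σtop : ∀ l, (1 : ENNReal) - σ l ≠ ⊤ := fun l =>
    ENNReal.sub_ne_top ENNReal.one_ne_top
  have hmem : ∀ (n : ℕ) (k : J → ℕ),
      k ∈ Finset.piAntidiag Finset.univ n ↔ (∑ i, k i) = n := by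
    intro n k
    simp [Finset.mem_piAntidiag]
  have hQsum : ∀ l, ∑' k : J → ℕ, Q l k = (1 - σ l)⁻¹ := by
    intro l
    rw [tsum_fiber_enn (fun k : J → ℕ => ∑ i, k i)
      (fun n => Finset.piAntidiag Finset.univ n) hmem (Q l)]
    have hstep : ∀ n : ℕ, ∑ k ∈ Finset.piAntidiag Finset.univ n, Q l k = (σ l) ^ n := by
      intro n
      rw [← hσsum l, Finset.sum_pow_eq_sum_piAntidiag Finset.univ (xx l) n]
    rw [tsum_congr hstep, ENNReal.tsum_geometric]
  have hQmean : ∀ l (j : J),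
      ∑' k : J → ℕ, (k j : ENNReal) * Q l k = xx l j * ((1 - σ l)⁻¹) ^ 2 := by
    intro l j
    rw [tsum_fiber_enn (fun k : J → ℕ => ∑ i, k i)
      (fun n => Finset.piAntidiag Finset.univ n) hmem
      (fun k => (k j : ENNReal) * Q l k)]
    have hc : ∀ n : ℕ, ∑ k ∈ Finset.piAntidiag Finset.univ n, (k j : ENNReal) * Q l k
        = if n = 0 then 0 else (n : ENNReal) * xx l j * (σ l) ^ (n - 1) := by
      intro n
      cases n with
      | zero => simp [hQ]
      | succ n =>
        have hmean := sum_piAntidiag_mean (xx l) j n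
        rw [hσsum l] at hmean
        simp only [hQ, ← mul_assoc]
        rw [hmean]
        simp only [Nat.succ_ne_zero, if_false, Nat.add_sub_cancel]
        push_cast
        ring
    rw [tsum_congr hc, tsum_eq_zero_add' ENNReal.summable]
    have h0' : (if (0 : ℕ) = 0 then (0 : ENNReal)
        else ((0 : ℕ) : ENNReal) * xx l j * σ l ^ (0 - 1)) = 0 := by simp
    rw [h0', zero_add]
    have hsucc : ∀ n : ℕ, (if n + 1 = 0 then (0 : ENNReal)
        else ((n + 1 : ℕ) : ENNReal) * xx l j * σ l ^ (n + 1 - 1))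
          = xx l j * (((n : ENNReal) + 1) * σ l ^ n) := by
      intro n
      rw [if_neg (Nat.succ_ne_zero n)]
      simp only [Nat.add_sub_cancel]
      push_cast
      ring
    rw [tsum_congr hsucc, ENNReal.tsum_mul_left, tsum_add_one_mul_geometric (σ l)]
  have hplnn : ∀ l k, 0 ≤ pl (A l) aJ (aL l) k := by
    intro l k
    unfold pl
    have h1 : (0 : ℝ) ≤ 1 - aL l := (h1aL l).le
    have h2 : (0 : ℝ) ≤ ((∑ j, k j).factorial : ℝ) / ∏ j, ((k j).factorial : ℝ) := by
      positivity
    have h3 : (0 : ℝ) ≤ ∏ j, (A l j * aJ j) ^ k j :=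
      Finset.prod_nonneg fun i _ => pow_nonneg (mul_nonneg (hA l i) (haJ0 i)) _
    exact mul_nonneg (mul_nonneg h1 h2) h3
  have hP : ∀ l k, ENNReal.ofReal (pl (A l) aJ (aL l) k)
      = ENNReal.ofReal (1 - aL l) * Q l k := by
    intro l k
    unfold pl
    rw [factorial_ratio k]
    rw [ENNReal.ofReal_mul (mul_nonneg (h1aL l).le (Nat.cast_nonneg _)),
      ENNReal.ofReal_mul (h1aL l).le,
      ENNReal.ofReal_prod_of_nonneg
        (fun i _ => pow_nonneg (mul_nonneg (hA l i) (haJ0 i)) _)]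
    have hpow : ∀ i : J, ENNReal.ofReal ((A l i * aJ i) ^ k i) = xx l i ^ k i := by
      intro i
      rw [ENNReal.ofReal_pow (mul_nonneg (hA l i) (haJ0 i))]
    rw [Finset.prod_congr rfl fun i _ => hpow i, ENNReal.ofReal_natCast, hQ, mul_assoc]
  have hPsum : ∀ l, ∑' k : J → ℕ, ENNReal.ofReal (pl (A l) aJ (aL l) k) = 1 := by
    intro l
    simp only [hP]
    rw [ENNReal.tsum_mul_left, hQsum l, ← h1σ l,
      ENNReal.mul_inv_cancel (h1σ0 l) (h1σtop l)]
  have hPmean : ∀ l (j : J),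
      ∑' k : J → ℕ, (k j : ENNReal) * ENNReal.ofReal (pl (A l) aJ (aL l) k)
        = ENNReal.ofReal (A l j * aJ j / (1 - aL l)) := by
    intro l j
    simp only [hP]
    have hre : ∀ k : J → ℕ, (k j : ENNReal) * (ENNReal.ofReal (1 - aL l) * Q l k)
        = ENNReal.ofReal (1 - aL l) * ((k j : ENNReal) * Q l k) := fun k => by ring
    rw [tsum_congr hre, ENNReal.tsum_mul_left, hQmean l j, ← h1σ l,
      ENNReal.ofReal_div_of_pos (h1aL l), ← h1σ l, div_eq_mul_inv, sq]
    calc (1 - σ l) * (xx l j * ((1 - σ l)⁻¹ * (1 - σ l)⁻¹))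
        = ((1 - σ l) * (1 - σ l)⁻¹) * (xx l j * (1 - σ l)⁻¹) := by ring
      _ = xx l j * (1 - σ l)⁻¹ := by
          rw [ENNReal.mul_inv_cancel (h1σ0 l) (h1σtop l), one_mul]
      _ = ENNReal.ofReal (A l j * aJ j) * (1 - σ l)⁻¹ := rfl
  have hkey : ∀ j : J,
      (∑' m : L → J → ℕ, ((∑ l, m l j : ℕ) : ℝ) * ∏ l, pl (A l) aJ (aL l) (m l))
        = aJ j * ∑ l, A l j / (1 - aL l) := by
    intro j
    set F : (L → J → ℕ) → ℝ :=
      fun m => ((∑ l, m l j : ℕ) : ℝ) * ∏ l, pl (A l) aJ (aL l) (m l) with hF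
    have hFnn : ∀ m, 0 ≤ F m := fun m =>
      mul_nonneg (Nat.cast_nonneg _) (Finset.prod_nonneg fun l _ => hplnn l (m l))
    have hofF : ∀ m, ENNReal.ofReal (F m)
        = ((∑ l, m l j : ℕ) : ENNReal) *
            ∏ l, ENNReal.ofReal (pl (A l) aJ (aL l) (m l)) := by
      intro m
      rw [hF]
      rw [ENNReal.ofReal_mul (Nat.cast_nonneg _), ENNReal.ofReal_natCast,
        ENNReal.ofReal_prod_of_nonneg (fun l _ => hplnn l (m l))]
    have hS : ∑' m : L → J → ℕ, ENNReal.ofReal (F m)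
        = ENNReal.ofReal (aJ j * ∑ l, A l j / (1 - aL l)) := by
      calc ∑' m : L → J → ℕ, ENNReal.ofReal (F m)
          = ∑' m : L → J → ℕ, ∑ l, (m l j : ENNReal) *
              ∏ l', ENNReal.ofReal (pl (A l') aJ (aL l') (m l')) := by
            refine tsum_congr fun m => ?_
            rw [hofF m, Nat.cast_sum, Finset.sum_mul]
        _ = ∑ l, ∑' m : L → J → ℕ, (m l j : ENNReal) *
              ∏ l', ENNReal.ofReal (pl (A l') aJ (aL l') (m l')) :=
            Summable.tsum_finsetSum fun l _ => ENNReal.summable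
        _ = ∑ l, ENNReal.ofReal (A l j * aJ j / (1 - aL l)) := by
            refine Finset.sum_congr rfl fun l0 _ => ?_
            have hsplit : ∀ m : L → J → ℕ,
                (m l0 j : ENNReal) * ∏ l', ENNReal.ofReal (pl (A l') aJ (aL l') (m l'))
                  = ∏ l', ((if l' = l0 then ((m l' j : ℕ) : ENNReal) else 1) *
                      ENNReal.ofReal (pl (A l') aJ (aL l') (m l'))) := by
              intro m
              rw [Finset.prod_mul_distrib,
                Finset.prod_ite_eq' Finset.univ l0 (fun l' => ((m l' j : ℕ) : ENNReal))]
              simp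
            calc ∑' m : L → J → ℕ, (m l0 j : ENNReal) *
                  ∏ l', ENNReal.ofReal (pl (A l') aJ (aL l') (m l'))
                = ∑' m : L → J → ℕ,
                    ∏ l', ((if l' = l0 then ((m l' j : ℕ) : ENNReal) else 1) *
                      ENNReal.ofReal (pl (A l') aJ (aL l') (m l'))) :=
                  tsum_congr fun m => hsplit m
              _ = ∏ l', ∑' k : J → ℕ, ((if l' = l0 then ((k j : ℕ) : ENNReal) else 1) *
                    ENNReal.ofReal (pl (A l') aJ (aL l') k)) :=
                  tsum_pi_prod (fun l' k =>
                    (if l' = l0 then ((k j : ℕ) : ENNReal) else 1) *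
                      ENNReal.ofReal (pl (A l') aJ (aL l') k))
              _ = ∏ l', (if l' = l0
                    then ENNReal.ofReal (A l' j * aJ j / (1 - aL l')) else 1) := by
                  refine Finset.prod_congr rfl fun l' _ => ?_
                  by_cases h : l' = l0
                  · simp only [if_pos h]
                    exact hPmean l' j
                  · simp only [if_neg h, one_mul]
                    exact hPsum l'
              _ = ENNReal.ofReal (A l0 j * aJ j / (1 - aL l0)) := by
                  rw [Finset.prod_ite_eq' Finset.univ l0
                    (fun l' => ENNReal.ofReal (A l' j * aJ j / (1 - aL l')))]
                  simp
        _ = ENNReal.ofReal (∑ l, A l j * aJ j / (1 - aL l)) :=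
            (ENNReal.ofReal_sum_of_nonneg
              (fun l _ => div_nonneg (mul_nonneg (hA l j) (haJ0 j)) (h1aL l).le)).symm
        _ = ENNReal.ofReal (aJ j * ∑ l, A l j / (1 - aL l)) := by
            congr 1
            rw [Finset.mul_sum]
            exact Finset.sum_congr rfl fun l _ => by ring
    have hsummable : Summable F := by
      have h := ENNReal.summable_toReal
        (f := fun m : L → J → ℕ => ENNReal.ofReal (F m))
        (by rw [hS]; exact ENNReal.ofReal_ne_top)
      exact h.congr fun m => ENNReal.toReal_ofReal (hFnn m)
    have heq : ENNReal.ofReal (∑' m, F m)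
        = ENNReal.ofReal (aJ j * ∑ l, A l j / (1 - aL l)) := by
      rw [ENNReal.ofReal_tsum_of_nonneg hFnn hsummable, hS]
    have hC0 : 0 ≤ aJ j * ∑ l, A l j / (1 - aL l) :=
      mul_nonneg (haJ0 j) (Finset.sum_nonneg fun l _ => div_nonneg (hA l j) (h1aL l).le)
    have hT0 : 0 ≤ ∑' m, F m := tsum_nonneg hFnn
    exact (ENNReal.ofReal_eq_ofReal_iff hT0 hC0).1 heq
  refine Finset.sum_congr rfl fun j hj => ?_
  have hj' : 0 < aJ j := hpos j (List.mem_toFinset.1 hj)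
  rw [hkey j, mul_comm, mul_div_assoc, div_self hj'.ne', mul_one]
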